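/- For y → +∞, ∫_ℝ H_{0,1}(x)² H_{0,1}'(x) H_{-1,0}(x+y) dx = -e^{-√2 y}(1/3 + o(1)). In particular, there exist constants 0 < c < C such that for all sufficiently large y, c·e^{-√2 y} ≤ -∫_ℝ H_{0,1}² H_{0,1}' H_{-1,0}(·+y) dx ≤ C·e^{-√2 y}. -/

import Mathlib

open Real MeasureTheory Filter Topology

noncomputable def H01 : ℝ → ℝ := fun x => Real.exp (Real.sqrt 2 * x) / Real.sqrt (1 + Real.exp (2 * Real.sqrt 2 * x))

noncomputable def Hm10 : ℝ → ℝ := fun x => -(Real.exp (-(Real.sqrt 2) * x) / Real.sqrt (1 + Real.exp (-(2 * Real.sqrt 2) * x)))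

noncomputable def phi16 : ℝ → ℝ := fun x =>
  Real.sqrt 2 * Real.exp (2 * Real.sqrt 2 * x) / (Real.sqrt (1 + Real.exp (2 * Real.sqrt 2 * x)))^5

noncomputable def psi16 : ℝ → ℝ := fun t =>
  (Real.sqrt (1 + Real.exp (-(2 * Real.sqrt 2) * t)))⁻¹

lemma g_pos (x : ℝ) : (0:ℝ) < 1 + Real.exp (2 * Real.sqrt 2 * x) := by positivity

lemma sqrtg_pos (x : ℝ) : 0 < Real.sqrt (1 + Real.exp (2 * Real.sqrt 2 * x)) :=
  Real.sqrt_pos.2 (g_pos x)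

lemma sq_sqrtg (x : ℝ) :
    (Real.sqrt (1 + Real.exp (2 * Real.sqrt 2 * x)))^2 = 1 + Real.exp (2 * Real.sqrt 2 * x) :=
  Real.sq_sqrt (g_pos x).le

lemma hasDerivAt_H01 (x : ℝ) :
    HasDerivAt H01
      (Real.sqrt 2 * Real.exp (Real.sqrt 2 * x) /
        (Real.sqrt (1 + Real.exp (2 * Real.sqrt 2 * x)))^3) x := by
  have hu : HasDerivAt (fun x : ℝ => Real.exp (Real.sqrt 2 * x))
      (Real.sqrt 2 * Real.exp (Real.sqrt 2 * x)) x := by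
    simpa [mul_comm] using ((hasDerivAt_id x).const_mul (Real.sqrt 2)).exp
  have hg : HasDerivAt (fun x : ℝ => 1 + Real.exp (2 * Real.sqrt 2 * x))
      (2 * Real.sqrt 2 * Real.exp (2 * Real.sqrt 2 * x)) x := by
    simpa [mul_comm] using
      (((hasDerivAt_id x).const_mul (2 * Real.sqrt 2)).exp).const_add 1
  have hG : HasDerivAt (fun x : ℝ => Real.sqrt (1 + Real.exp (2 * Real.sqrt 2 * x)))
      (2 * Real.sqrt 2 * Real.exp (2 * Real.sqrt 2 * x) /
        (2 * Real.sqrt (1 + Real.exp (2 * Real.sqrt 2 * x)))) x :=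
    hg.sqrt (g_pos x).ne'
  have h := hu.div hG (sqrtg_pos x).ne'
  refine h.congr_deriv (Eq.symm ?_)
  have h2 := sq_sqrtg x
  field_simp
  rw [show Real.sqrt 2 * x * 2 = 2 * Real.sqrt 2 * x by ring]
  linear_combination -h2

lemma integrand_eq (x y : ℝ) :
    (H01 x)^2 * deriv H01 x * Hm10 (x + y) =
      -(Real.exp (-(Real.sqrt 2) * y) * (phi16 x * psi16 (x + y))) := by
  have hd : deriv H01 x = Real.sqrt 2 * Real.exp (Real.sqrt 2 * x) /
      (Real.sqrt (1 + Real.exp (2 * Real.sqrt 2 * x)))^3 := (hasDerivAt_H01 x).deriv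
  have he2 : Real.exp (2 * Real.sqrt 2 * x) = Real.exp (Real.sqrt 2 * x) * Real.exp (Real.sqrt 2 * x) := by
    rw [← Real.exp_add]; ring_nf
  have hexy : Real.exp (-(Real.sqrt 2) * (x + y)) =
      (Real.exp (Real.sqrt 2 * x))⁻¹ * Real.exp (-(Real.sqrt 2) * y) := by
    rw [← Real.exp_neg, ← Real.exp_add]; ring_nf
  have h2 := sq_sqrtg x
  simp only [H01, Hm10, phi16, psi16, hd]
  rw [hexy]
  have hE := (Real.exp_pos (Real.sqrt 2 * x)).ne'
  have hS := (sqrtg_pos x).ne'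
  rw [he2] at h2 ⊢
  field_simp

noncomputable def Phi16 : ℝ → ℝ := fun x =>
  -(1/3) * ((Real.sqrt (1 + Real.exp (2 * Real.sqrt 2 * x)))^3)⁻¹

lemma hasDerivAt_Phi16 (x : ℝ) : HasDerivAt Phi16 (phi16 x) x := by
  have hg : HasDerivAt (fun x : ℝ => 1 + Real.exp (2 * Real.sqrt 2 * x))
      (2 * Real.sqrt 2 * Real.exp (2 * Real.sqrt 2 * x)) x := by
    simpa [mul_comm] using
      (((hasDerivAt_id x).const_mul (2 * Real.sqrt 2)).exp).const_add 1
  have hG : HasDerivAt (fun x : ℝ => Real.sqrt (1 + Real.exp (2 * Real.sqrt 2 * x)))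
      (2 * Real.sqrt 2 * Real.exp (2 * Real.sqrt 2 * x) /
        (2 * Real.sqrt (1 + Real.exp (2 * Real.sqrt 2 * x)))) x :=
    hg.sqrt (g_pos x).ne'
  have hG3 := hG.pow 3
  have hinv := hG3.inv (pow_ne_zero 3 (sqrtg_pos x).ne')
  have h := hinv.const_mul (-(1/3 : ℝ))
  refine h.congr_deriv (Eq.symm ?_)
  have h2 := sq_sqrtg x
  have hS := (sqrtg_pos x).ne'
  simp only [phi16]
  field_simp
  simp only [Pi.pow_apply]
  push_cast
  ring

lemma phi16_nonneg (x : ℝ) : 0 ≤ phi16 x := by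
  unfold phi16; positivity

lemma continuous_phi16 : Continuous phi16 := by
  apply Continuous.div
  · continuity
  · exact (Real.continuous_sqrt.comp (by continuity)).pow 5
  · exact fun x => pow_ne_zero 5 (sqrtg_pos x).ne'

lemma sqrtg_ge_exp (x : ℝ) :
    Real.exp (Real.sqrt 2 * x) ≤ Real.sqrt (1 + Real.exp (2 * Real.sqrt 2 * x)) := by
  have h : Real.exp (2 * Real.sqrt 2 * x) = (Real.exp (Real.sqrt 2 * x))^2 := by
    rw [← Real.exp_nat_mul]; ring_nf
  calc Real.exp (Real.sqrt 2 * x) = Real.sqrt ((Real.exp (Real.sqrt 2 * x))^2) := by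
        rw [Real.sqrt_sq (Real.exp_pos _).le]
    _ ≤ _ := Real.sqrt_le_sqrt (by rw [h]; linarith)

lemma integrable_phi16 : Integrable phi16 := by
  rw [← integrableOn_univ, ← Set.Iic_union_Ioi (a := (0:ℝ))]
  apply IntegrableOn.union
  · -- on Iic 0, bound by √2 * exp x
    apply Integrable.mono' ((integrableOn_exp_Iic 0).const_mul (Real.sqrt 2))
    · exact continuous_phi16.aestronglyMeasurable.restrict
    · refine (ae_restrict_iff' measurableSet_Iic).2 (ae_of_all _ fun x hx => ?_)
      rw [Real.norm_of_nonneg (phi16_nonneg x)]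
      have h1 : (1:ℝ) ≤ Real.sqrt (1 + Real.exp (2 * Real.sqrt 2 * x)) := by
        have := Real.sqrt_le_sqrt (show (1:ℝ) ≤ 1 + Real.exp (2 * Real.sqrt 2 * x) by
          linarith [Real.exp_pos (2 * Real.sqrt 2 * x)])
        simpa [Real.sqrt_one] using this
      have h5 : (1:ℝ) ≤ (Real.sqrt (1 + Real.exp (2 * Real.sqrt 2 * x)))^5 :=
        one_le_pow₀ h1
      have hle : Real.exp (2 * Real.sqrt 2 * x) ≤ Real.exp x := by
        apply Real.exp_le_exp.2
        have hss : Real.sqrt 2 ^ 2 = 2 := Real.sq_sqrt (by norm_num)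
        have h2 : (1:ℝ) ≤ 2 * Real.sqrt 2 := by nlinarith [Real.sqrt_nonneg 2]
        calc 2 * Real.sqrt 2 * x ≤ 1 * x := by
              exact mul_le_mul_of_nonpos_right h2 (Set.mem_Iic.1 hx)
          _ = x := one_mul x
      have hb : phi16 x ≤ Real.sqrt 2 * Real.exp (2 * Real.sqrt 2 * x) / 1 :=
        div_le_div_of_nonneg_left (by positivity) one_pos h5
      rw [div_one] at hb
      exact hb.trans (mul_le_mul_of_nonneg_left hle (Real.sqrt_nonneg 2))
  · -- on Ioi 0, bound by √2 * exp (-(3√2) x)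
    have hs3 : (0:ℝ) < 3 * Real.sqrt 2 := by positivity
    apply Integrable.mono' ((exp_neg_integrableOn_Ioi 0 hs3).const_mul (Real.sqrt 2))
    · exact continuous_phi16.aestronglyMeasurable.restrict
    · refine ae_of_all _ fun x => ?_
      rw [Real.norm_of_nonneg (phi16_nonneg x)]
      have h1 := sqrtg_ge_exp x
      have h5 : Real.exp (Real.sqrt 2 * x)^5 ≤ (Real.sqrt (1 + Real.exp (2 * Real.sqrt 2 * x)))^5 :=
        pow_le_pow_left₀ (Real.exp_pos _).le h1 5
      have he5 : Real.exp (Real.sqrt 2 * x)^5 = Real.exp (5 * (Real.sqrt 2 * x)) := by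
        rw [← Real.exp_nat_mul]; norm_num
      calc phi16 x ≤ Real.sqrt 2 * Real.exp (2 * Real.sqrt 2 * x) / Real.exp (Real.sqrt 2 * x)^5 := by
            unfold phi16
            apply div_le_div_of_nonneg_left (by positivity) (by positivity) h5
        _ = Real.sqrt 2 * Real.exp (-(3 * Real.sqrt 2) * x) := by
            rw [he5, mul_div_assoc, ← Real.exp_sub]
            congr 1
            ring

lemma integral_phi16 : ∫ x : ℝ, phi16 x = 1/3 := by
  have hbot : Tendsto Phi16 atBot (𝓝 (-(1/3))) := by
    have l1 : Tendsto (fun x : ℝ => 2 * Real.sqrt 2 * x) atBot atBot :=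
      (tendsto_const_mul_atBot_of_pos (by positivity)).2 tendsto_id
    have l2 : Tendsto (fun x : ℝ => 1 + Real.exp (2 * Real.sqrt 2 * x)) atBot (𝓝 1) := by
      simpa using tendsto_const_nhds.add (Real.tendsto_exp_atBot.comp l1)
    have hc : ContinuousAt (fun u : ℝ => -(1/3) * ((Real.sqrt u)^3)⁻¹) 1 := by
      have h1 : ContinuousAt Real.sqrt 1 := Real.continuous_sqrt.continuousAt
      exact ((h1.pow 3).inv₀ (by norm_num [Real.sqrt_one])).const_mul _
    have h := hc.tendsto.comp l2
    rw [show Phi16 = (fun u : ℝ => -(1/3) * ((Real.sqrt u)^3)⁻¹) ∘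
      (fun x : ℝ => 1 + Real.exp (2 * Real.sqrt 2 * x)) from rfl]
    convert h using 2
    norm_num [Real.sqrt_one]
  have htop : Tendsto Phi16 atTop (𝓝 0) := by
    have l1 : Tendsto (fun x : ℝ => 2 * Real.sqrt 2 * x) atTop atTop :=
      Tendsto.const_mul_atTop (by positivity) tendsto_id
    have l2 : Tendsto (fun x : ℝ => 1 + Real.exp (2 * Real.sqrt 2 * x)) atTop atTop :=
      tendsto_atTop_add_const_left _ 1 (Real.tendsto_exp_atTop.comp l1)
    -- squeeze : 0 ≤ ((√g)^3)⁻¹ ≤ g⁻¹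
    have hsq : Tendsto (fun x : ℝ => ((Real.sqrt (1 + Real.exp (2 * Real.sqrt 2 * x)))^3)⁻¹)
        atTop (𝓝 0) := by
      apply squeeze_zero (fun x => by positivity)
        (g := fun x : ℝ => (1 + Real.exp (2 * Real.sqrt 2 * x))⁻¹)
      · intro x
        apply inv_anti₀ (g_pos x)
        have h1 : (1:ℝ) ≤ Real.sqrt (1 + Real.exp (2 * Real.sqrt 2 * x)) := by
          have := Real.sqrt_le_sqrt (show (1:ℝ) ≤ 1 + Real.exp (2 * Real.sqrt 2 * x) by
            linarith [Real.exp_pos (2 * Real.sqrt 2 * x)])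
          simpa [Real.sqrt_one] using this
        calc 1 + Real.exp (2 * Real.sqrt 2 * x)
            = (Real.sqrt (1 + Real.exp (2 * Real.sqrt 2 * x)))^2 := (sq_sqrtg x).symm
          _ ≤ (Real.sqrt (1 + Real.exp (2 * Real.sqrt 2 * x)))^3 :=
              pow_le_pow_right₀ h1 (by norm_num)
      · exact l2.inv_tendsto_atTop
    have h := hsq.const_mul (-(1/3 : ℝ))
    rw [show Phi16 = (fun x : ℝ =>
      -(1/3) * ((Real.sqrt (1 + Real.exp (2 * Real.sqrt 2 * x)))^3)⁻¹) from rfl]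
    simpa using h
  have := MeasureTheory.integral_of_hasDerivAt_of_tendsto hasDerivAt_Phi16
    integrable_phi16 hbot htop
  rw [this]; norm_num

lemma psi16_nonneg (t : ℝ) : 0 ≤ psi16 t := by unfold psi16; positivity

lemma psi16_le_one (t : ℝ) : psi16 t ≤ 1 := by
  unfold psi16
  apply inv_le_one_of_one_le₀
  have := Real.sqrt_le_sqrt (show (1:ℝ) ≤ 1 + Real.exp (-(2 * Real.sqrt 2) * t) by
    linarith [Real.exp_pos (-(2 * Real.sqrt 2) * t)])
  simpa [Real.sqrt_one] using this

lemma continuous_psi16 : Continuous psi16 := by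
  apply Continuous.inv₀ (Real.continuous_sqrt.comp (by continuity))
  intro t
  exact (Real.sqrt_pos.2 (by positivity)).ne'

lemma key16 : Tendsto (fun y : ℝ => ∫ x : ℝ, phi16 x * psi16 (x + y)) atTop (𝓝 (1/3)) := by
  rw [← integral_phi16]
  apply tendsto_integral_filter_of_dominated_convergence phi16
  · exact Eventually.of_forall fun y =>
      (continuous_phi16.mul (continuous_psi16.comp (by continuity))).aestronglyMeasurable
  · refine Eventually.of_forall fun y => ae_of_all _ fun x => ?_
    rw [Real.norm_of_nonneg (mul_nonneg (phi16_nonneg x) (psi16_nonneg _))]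
    calc phi16 x * psi16 (x + y) ≤ phi16 x * 1 :=
          mul_le_mul_of_nonneg_left (psi16_le_one _) (phi16_nonneg x)
      _ = phi16 x := mul_one _
  · exact integrable_phi16
  · refine ae_of_all _ fun x => ?_
    have l1 : Tendsto (fun y : ℝ => -(2 * Real.sqrt 2) * (x + y)) atTop atBot := by
      have hpos : (0:ℝ) < 2 * Real.sqrt 2 := by positivity
      apply (tendsto_const_mul_atBot_of_neg (by linarith)).2
      exact tendsto_atTop_add_const_left _ x tendsto_id
    have l2 : Tendsto (fun y : ℝ => 1 + Real.exp (-(2 * Real.sqrt 2) * (x + y))) atTop (𝓝 1) := by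
      simpa using tendsto_const_nhds.add (Real.tendsto_exp_atBot.comp l1)
    have hc : ContinuousAt (fun u : ℝ => (Real.sqrt u)⁻¹) 1 :=
      Real.continuous_sqrt.continuousAt.inv₀ (by norm_num [Real.sqrt_one])
    have h := (hc.tendsto.comp l2).const_mul (phi16 x)
    rw [show (fun y : ℝ => phi16 x * psi16 (x + y)) = fun y : ℝ => phi16 x *
      (((fun u : ℝ => (Real.sqrt u)⁻¹) ∘
        (fun y : ℝ => 1 + Real.exp (-(2 * Real.sqrt 2) * (x + y)))) y) from rfl]
    simpa [Real.sqrt_one] using h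

theorem stmt16 :
    Tendsto (fun y : ℝ => (∫ x : ℝ, (H01 x)^2 * deriv H01 x * Hm10 (x + y)) / Real.exp (-(Real.sqrt 2) * y))
      atTop (𝓝 (-(1/3))) ∧
    ∃ c C : ℝ, 0 < c ∧ c < C ∧
      ∀ᶠ y in atTop,
        c * Real.exp (-(Real.sqrt 2) * y) ≤ -(∫ x : ℝ, (H01 x)^2 * deriv H01 x * Hm10 (x + y)) ∧
        -(∫ x : ℝ, (H01 x)^2 * deriv H01 x * Hm10 (x + y)) ≤ C * Real.exp (-(Real.sqrt 2) * y) := by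
  have hexp : ∀ y : ℝ, Real.exp (-(Real.sqrt 2) * y) ≠ 0 := fun y => (Real.exp_pos _).ne'
  have hI : ∀ y : ℝ, (∫ x : ℝ, (H01 x)^2 * deriv H01 x * Hm10 (x + y)) =
      -(Real.exp (-(Real.sqrt 2) * y) * ∫ x : ℝ, phi16 x * psi16 (x + y)) := by
    intro y
    rw [show (fun x : ℝ => (H01 x)^2 * deriv H01 x * Hm10 (x + y)) = fun x : ℝ =>
      -(Real.exp (-(Real.sqrt 2) * y) * (phi16 x * psi16 (x + y))) from
      funext fun x => integrand_eq x y]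
    rw [integral_neg, MeasureTheory.integral_const_mul]
  constructor
  · apply (key16.neg).congr
    intro y
    rw [hI y, neg_div, mul_div_cancel_left₀ _ (hexp y)]
  · refine ⟨1/4, 5/12, by norm_num, by norm_num, ?_⟩
    have hmem : Set.Ioo (1/4 : ℝ) (5/12) ∈ 𝓝 (1/3 : ℝ) := Ioo_mem_nhds (by norm_num) (by norm_num)
    filter_upwards [key16.eventually hmem] with y hy
    have he : 0 < Real.exp (-(Real.sqrt 2) * y) := Real.exp_pos _
    rw [hI y, neg_neg]
    constructor
    · nlinarith [hy.1, he]
    · nlinarith [hy.2, he]
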